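/- Let F be a finite field of cardinality q = p^ℓ, 0 ≤ h < ℓ, λ ∈ F^× with λ^{1+p^h} = 1, t the order of λ in F^×, and gcd(n, t) = 1. Then there exists γ ∈ F^× (a power of λ) with γⁿ = λ^{−1} and γ^{1+p^h} = 1, such that the map η : F[X]/⟨Xⁿ−1⟩ → F[X]/⟨Xⁿ−λ⟩ sending Σaᵢ Xⁱ to Σaᵢγⁱ Xⁱ (mod Xⁿ−λ) is an F-algebra isomorphism that preserves Hamming weight and preserves the Galois p^h-inner product: ⟨η(a), η(b)⟩_h = ⟨a, b⟩_h for all a, b. -/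

import Mathlib

open Polynomial

/-- The quotient ring `R_λ = F[X]/⟨Xⁿ − λ⟩`. -/
abbrev Rlam (F : Type*) [Field F] (n : ℕ) (lam : F) :=
  F[X] ⧸ Ideal.span {(X : F[X]) ^ n - C lam}

/-- The Galois inner product `⟨a,b⟩ = ∑ aᵢ bᵢ^e` on `Fⁿ`, where `e = p^h`. -/
def gin1 {F : Type*} [Field F] {n : ℕ} (e : ℕ) (a b : Fin n → F) : F :=
  ∑ i, a i * b i ^ e

/-- The Hamming weight of a word in `Fⁿ`. -/
noncomputable def wt1 {F : Type*} [Field F] {n : ℕ} (v : Fin n → F) : ℕ :=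
  {i | v i ≠ 0}.ncard

/-- Auxiliary: the algebra hom `F[X] → F[X]/⟨Xⁿ−μ⟩` sending `X ↦ γX`. -/
noncomputable def scaleHom {F : Type*} [Field F] (n : ℕ) (mu gam : F) :
    F[X] →ₐ[F] Rlam F n mu :=
  aeval (Ideal.Quotient.mk (Ideal.span {(X : F[X]) ^ n - C mu}) (C gam * X))

lemma scaleHom_apply {F : Type*} [Field F] (n : ℕ) (mu gam : F) (q : F[X]) :
    scaleHom n mu gam q =
      Ideal.Quotient.mk (Ideal.span {(X : F[X]) ^ n - C mu}) (aeval (C gam * X) q) := by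
  exact aeval_algHom_apply (Ideal.Quotient.mkₐ F _) (C gam * X) q

lemma scaleHom_gen {F : Type*} [Field F] (n : ℕ) (mu gam nu : F)
    (hgn : gam ^ n * mu = nu) :
    scaleHom n mu gam ((X : F[X]) ^ n - C nu) = 0 := by
  rw [scaleHom_apply]
  have : aeval (C gam * X) ((X : F[X]) ^ n - C nu) =
      C (gam ^ n) * ((X : F[X]) ^ n - C mu) := by
    rw [map_sub, map_pow, aeval_X, aeval_C, algebraMap_eq, mul_sub, mul_pow, ← C_pow,
      ← C_mul, hgn]
  rw [this, Ideal.Quotient.eq_zero_iff_mem]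
  exact Ideal.mul_mem_left _ _ (Ideal.subset_span rfl)

lemma scaleHom_vanish {F : Type*} [Field F] (n : ℕ) (mu gam nu : F)
    (hgn : gam ^ n * mu = nu) :
    ∀ a ∈ Ideal.span {(X : F[X]) ^ n - C nu}, scaleHom n mu gam a = 0 := by
  intro a ha
  rw [Ideal.mem_span_singleton] at ha
  obtain ⟨c, rfl⟩ := ha
  rw [map_mul, scaleHom_gen n mu gam nu hgn, zero_mul]

theorem stmt_17 {F : Type*} [Field F] [Fintype F] {p ℓ h n : ℕ} [NeZero n]
    (hp : p.Prime) (hcard : Fintype.card F = p ^ ℓ) (hh : h < ℓ)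
    (lam : F) (hlam : lam ≠ 0) (hlam1 : lam ^ (1 + p ^ h) = 1)
    (hn : Nat.gcd n (orderOf lam) = 1)
    (ι₁ : (Fin n → F) ≃ₗ[F] Rlam F n 1)
    (hι₁ : ∀ v : Fin n → F,
      ι₁ v = Ideal.Quotient.mk _ (∑ i : Fin n, C (v i) * (X : F[X]) ^ (i : ℕ)))
    (ι₂ : (Fin n → F) ≃ₗ[F] Rlam F n lam)
    (hι₂ : ∀ v : Fin n → F,
      ι₂ v = Ideal.Quotient.mk _ (∑ i : Fin n, C (v i) * (X : F[X]) ^ (i : ℕ))) :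
    ∃ γ : F, (∃ s : ℕ, γ = lam ^ s) ∧ γ ^ n = lam⁻¹ ∧ γ ^ (1 + p ^ h) = 1 ∧
      ∃ η : Rlam F n 1 ≃ₐ[F] Rlam F n lam,
        (∀ v : Fin n → F, η (ι₁ v) = ι₂ fun i => γ ^ (i : ℕ) * v i) ∧
        (∀ a : Rlam F n 1, wt1 (ι₂.symm (η a)) = wt1 (ι₁.symm a)) ∧
        (∀ a b : Rlam F n 1,
          gin1 (p ^ h) (ι₂.symm (η a)) (ι₂.symm (η b)) =
            gin1 (p ^ h) (ι₁.symm a) (ι₁.symm b)) := by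
  classical
  set t := orderOf lam with ht_def
  -- `lam` has finite (positive) order
  have hq1 : 1 < Fintype.card F := Fintype.one_lt_card
  have hfin : IsOfFinOrder lam := by
    refine isOfFinOrder_iff_pow_eq_one.2 ⟨Fintype.card F - 1, by omega, ?_⟩
    exact FiniteField.pow_card_sub_one_eq_one lam hlam
  have ht : 0 < t := hfin.orderOf_pos
  haveI : NeZero t := ⟨ht.ne'⟩
  -- find s with n * s ≡ -1 (mod t)
  have hcop : Nat.Coprime n t := hn
  set u : (ZMod t)ˣ := ZMod.unitOfCoprime n hcop with hu
  set s : ℕ := ((((u⁻¹ : (ZMod t)ˣ) : ZMod t)) * (-1)).val with hs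
  have hns : ((n * s : ℕ) : ZMod t) = -1 := by
    push_cast
    rw [hs, ZMod.natCast_val, ZMod.cast_id]
    have hnu : (n : ZMod t) = (u : ZMod t) := (ZMod.coe_unitOfCoprime n hcop).symm
    rw [hnu, ← mul_assoc]
    norm_cast
    rw [mul_inv_cancel]
    simp
  have hdvd : t ∣ n * s + 1 := by
    have : ((n * s + 1 : ℕ) : ZMod t) = 0 := by push_cast [hns]; ring
    exact (ZMod.natCast_eq_zero_iff _ _).1 this
  have hpow : lam ^ (n * s + 1) = 1 := orderOf_dvd_iff_pow_eq_one.1 hdvd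
  set γ : F := lam ^ s with hγ
  have hγ0 : γ ≠ 0 := pow_ne_zero _ hlam
  have hγn1 : γ ^ n * lam = 1 := by
    rw [hγ, ← pow_mul, mul_comm s n, ← pow_succ, hpow]
  have hγn : γ ^ n = lam⁻¹ := eq_inv_of_mul_eq_one_left hγn1
  have hγh : γ ^ (1 + p ^ h) = 1 := by
    rw [hγ, ← pow_mul, mul_comm s (1 + p ^ h), pow_mul, hlam1, one_pow]
  refine ⟨γ, ⟨s, rfl⟩, hγn, hγh, ?_⟩
  -- build the algebra isomorphism
  have hfwd : γ ^ n * lam = 1 := hγn1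
  have hbwd : (γ⁻¹) ^ n * 1 = lam := by
    rw [mul_one, inv_pow, hγn, inv_inv]
  set f : F[X] →ₐ[F] Rlam F n lam := scaleHom n lam γ with hf
  set g : F[X] →ₐ[F] Rlam F n 1 := scaleHom n 1 γ⁻¹ with hg
  set fbar : Rlam F n 1 →ₐ[F] Rlam F n lam :=
    Ideal.Quotient.liftₐ _ f (scaleHom_vanish n lam γ 1 hfwd) with hfbar
  set gbar : Rlam F n lam →ₐ[F] Rlam F n 1 :=
    Ideal.Quotient.liftₐ _ g (scaleHom_vanish n 1 γ⁻¹ lam hbwd) with hgbar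
  have hfbar_mk : ∀ q : F[X], fbar (Ideal.Quotient.mk _ q) =
      Ideal.Quotient.mk _ (aeval (C γ * X) q) := by
    intro q
    rw [hfbar, Ideal.Quotient.liftₐ_apply]
    exact scaleHom_apply n lam γ q
  have hgbar_mk : ∀ q : F[X], gbar (Ideal.Quotient.mk _ q) =
      Ideal.Quotient.mk _ (aeval (C γ⁻¹ * X) q) := by
    intro q
    rw [hgbar, Ideal.Quotient.liftₐ_apply]
    exact scaleHom_apply n 1 γ⁻¹ q
  have hcomp1 : ∀ x : Rlam F n 1, gbar (fbar x) = x := by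
    intro x
    obtain ⟨q, rfl⟩ := Ideal.Quotient.mk_surjective x
    rw [hfbar_mk, hgbar_mk]
    congr 1
    rw [← aeval_algHom_apply (aeval (C γ⁻¹ * X) : F[X] →ₐ[F] F[X]), map_mul, aeval_C,
      aeval_X, algebraMap_eq, ← mul_assoc, ← C_mul, mul_inv_cancel₀ hγ0, C_1, one_mul]
    exact congrFun (congrArg DFunLike.coe aeval_X_left) q
  have hcomp2 : ∀ x : Rlam F n lam, fbar (gbar x) = x := by
    intro x
    obtain ⟨q, rfl⟩ := Ideal.Quotient.mk_surjective x
    rw [hgbar_mk, hfbar_mk]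
    congr 1
    rw [← aeval_algHom_apply (aeval (C γ * X) : F[X] →ₐ[F] F[X]), map_mul, aeval_C,
      aeval_X, algebraMap_eq, ← mul_assoc, ← C_mul, inv_mul_cancel₀ hγ0, C_1, one_mul]
    exact congrFun (congrArg DFunLike.coe aeval_X_left) q
  set η : Rlam F n 1 ≃ₐ[F] Rlam F n lam :=
    AlgEquiv.ofAlgHom fbar gbar (AlgHom.ext hcomp2) (AlgHom.ext hcomp1) with hη
  have hηx : ∀ x, η x = fbar x := fun _ => rfl
  have hη_apply : ∀ v : Fin n → F, η (ι₁ v) = ι₂ fun i => γ ^ (i : ℕ) * v i := by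
    intro v
    rw [hι₁, hι₂, hηx, hfbar_mk]
    congr 1
    rw [map_sum]
    refine Finset.sum_congr rfl fun i _ => ?_
    rw [map_mul, aeval_C, map_pow, aeval_X, algebraMap_eq, mul_pow, ← C_pow, C_mul]
    ring
  refine ⟨η, hη_apply, ?_, ?_⟩
  · intro a
    have ha : a = ι₁ (ι₁.symm a) := (ι₁.apply_symm_apply a).symm
    set v := ι₁.symm a with hv
    have : ι₂.symm (η a) = fun i : Fin n => γ ^ (i : ℕ) * v i := by
      conv_lhs => rw [ha]
      rw [hη_apply v, LinearEquiv.symm_apply_apply]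
    rw [this, wt1, wt1]
    congr 1
    ext i
    simp [mul_eq_zero, pow_eq_zero_iff, hγ0]
  · intro a b
    set v := ι₁.symm a with hv
    set w := ι₁.symm b with hw
    have ha : ι₂.symm (η a) = fun i : Fin n => γ ^ (i : ℕ) * v i := by
      conv_lhs => rw [show a = ι₁ v from (ι₁.apply_symm_apply a).symm]
      rw [hη_apply v, LinearEquiv.symm_apply_apply]
    have hb : ι₂.symm (η b) = fun i : Fin n => γ ^ (i : ℕ) * w i := by
      conv_lhs => rw [show b = ι₁ w from (ι₁.apply_symm_apply b).symm]
      rw [hη_apply w, LinearEquiv.symm_apply_apply]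
    rw [ha, hb, gin1, gin1]
    refine Finset.sum_congr rfl fun i _ => ?_
    have key : γ ^ (i : ℕ) * (γ ^ (i : ℕ)) ^ (p ^ h) = 1 := by
      have hkey : γ ^ (i : ℕ) * (γ ^ (i : ℕ)) ^ (p ^ h) = (γ ^ (1 + p ^ h)) ^ (i : ℕ) := by
        ring
      rw [hkey, hγh, one_pow]
    calc γ ^ (i : ℕ) * v i * (γ ^ (i : ℕ) * w i) ^ p ^ h
        = (γ ^ (i : ℕ) * (γ ^ (i : ℕ)) ^ (p ^ h)) * (v i * w i ^ p ^ h) := by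
          rw [mul_pow]; ring
      _ = v i * w i ^ p ^ h := by rw [key, one_mul]
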